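/- arXiv:2511.20529 — 4 statements merged into one kernel-verified Lean document; each statement's English description precedes it below -/
import Mathlib

section
/- The histopolation functions h_1, …, h_N, regarded as functions on [a,b], are linearly independent over ℝ. -/
/-- The histopolation functions `h 1, …, h N`, regarded as functions on
`[a,b]`, are linearly independent over ℝ: any linear combination vanishing on `[a,b]`
has all coefficients zero. -/
theorem histopolation_linear_independent
    (N : ℕ) (hN : 1 ≤ N) (a b : ℝ) (x : ℕ → ℝ)
    (hx0 : x 0 = a) (hxN : x N = b)
    (hgrid : ∀ i, i < N → x i < x (i + 1))
    (l : ℕ → ℝ → ℝ)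
    (hC1 : ∀ i ≤ N, ContDiffOn ℝ 1 (l i) (Set.Icc a b))
    (hlag : ∀ i ≤ N, ∀ j ≤ N, l i (x j) = if i = j then (1 : ℝ) else 0)
    (h : ℕ → ℝ → ℝ)
    (hdef : ∀ i, 1 ≤ i → i ≤ N → ∀ t : ℝ,
      h i t = -∑ j ∈ Finset.range i, derivWithin (l j) (Set.Icc a b) t) :
    ∀ c : ℕ → ℝ,
      (∀ t ∈ Set.Icc a b, ∑ i ∈ Finset.Icc 1 N, c i * h i t = 0) →
      ∀ i, 1 ≤ i → i ≤ N → c i = 0 := by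
  intro c hc
  -- monotonicity of the grid
  have hmono : ∀ j, j ≤ N → ∀ i, i ≤ j → x i ≤ x j := by
    intro j hj
    induction j with
    | zero => intro i hi; interval_cases i; exact le_rfl
    | succ n ih =>
      intro i hi
      rcases Nat.lt_or_ge i (n + 1) with h' | h'
      · exact le_trans (ih (by omega) i (by omega)) (le_of_lt (hgrid n (by omega)))
      · have : i = n + 1 := by omega
        subst this; exact le_rfl
  have hab : a < b := by
    have h1 := hgrid 0 (by omega)
    have h2 := hmono N le_rfl 1 hN
    rw [← hx0, ← hxN]; linarith
  have hxmem : ∀ k, k ≤ N → x k ∈ Set.Icc a b := by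
    intro k hk
    constructor
    · rw [← hx0]; exact hmono k hk 0 (Nat.zero_le _)
    · rw [← hxN]; exact hmono N le_rfl k hk
  have hUD : UniqueDiffOn ℝ (Set.Icc a b) := uniqueDiffOn_Icc hab
  set d : ℕ → ℝ := fun j => ∑ i ∈ Finset.Icc (j + 1) N, c i with hd
  set G : ℝ → ℝ := fun t => -∑ j ∈ Finset.range N, d j * l j t with hG
  have hdiffl : ∀ j, j ≤ N → DifferentiableOn ℝ (l j) (Set.Icc a b) := fun j hj =>
    (hC1 j hj).differentiableOn one_ne_zero
  have hGdiff : DifferentiableOn ℝ G (Set.Icc a b) := by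
    apply DifferentiableOn.neg
    apply DifferentiableOn.fun_sum
    intro j hj
    exact (hdiffl j (le_of_lt (Finset.mem_range.mp hj))).const_mul (d j)
  have hGderiv : ∀ t ∈ Set.Icc a b,
      derivWithin G (Set.Icc a b) t
        = -∑ j ∈ Finset.range N, d j * derivWithin (l j) (Set.Icc a b) t := by
    intro t ht
    have H : HasDerivWithinAt G
        (-∑ j ∈ Finset.range N, d j * derivWithin (l j) (Set.Icc a b) t)
        (Set.Icc a b) t := by
      apply HasDerivWithinAt.neg
      apply HasDerivWithinAt.fun_sum
      intro j hj
      exact (((hdiffl j (le_of_lt (Finset.mem_range.mp hj))) t ht).hasDerivWithinAt).const_mul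
        (d j)
    exact H.derivWithin (hUD t ht)
  -- the linear combination equals derivWithin G
  have hcomb : ∀ t ∈ Set.Icc a b,
      derivWithin G (Set.Icc a b) t = ∑ i ∈ Finset.Icc 1 N, c i * h i t := by
    intro t ht
    rw [hGderiv t ht]
    have hswap :
        ∑ i ∈ Finset.Icc 1 N, ∑ j ∈ Finset.range i,
            c i * derivWithin (l j) (Set.Icc a b) t
          = ∑ j ∈ Finset.range N, ∑ i ∈ Finset.Icc (j + 1) N,
              c i * derivWithin (l j) (Set.Icc a b) t := by
      apply Finset.sum_comm'
      intro i j
      simp only [Finset.mem_Icc, Finset.mem_range]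
      omega
    calc -∑ j ∈ Finset.range N, d j * derivWithin (l j) (Set.Icc a b) t
        = -∑ j ∈ Finset.range N, ∑ i ∈ Finset.Icc (j + 1) N,
            c i * derivWithin (l j) (Set.Icc a b) t := by
          congr 1
          refine Finset.sum_congr rfl fun j _ => ?_
          rw [hd, Finset.sum_mul]
      _ = -∑ i ∈ Finset.Icc 1 N, ∑ j ∈ Finset.range i,
            c i * derivWithin (l j) (Set.Icc a b) t := by rw [hswap]
      _ = ∑ i ∈ Finset.Icc 1 N, c i * h i t := by
          rw [← Finset.sum_neg_distrib]
          refine Finset.sum_congr rfl fun i hi => ?_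
          simp only [Finset.mem_Icc] at hi
          rw [hdef i hi.1 hi.2 t, ← Finset.mul_sum, mul_neg]
  -- derivWithin G vanishes, so G is constant
  have hGconst : ∀ t ∈ Set.Icc a b, G t = G a :=
    constant_of_derivWithin_zero hGdiff (fun t ht => by
      rw [hcomb t (Set.Ico_subset_Icc_self ht)]
      exact hc t (Set.Ico_subset_Icc_self ht))
  -- value of G at grid points
  have hGx : ∀ k, k ≤ N → G (x k) = -∑ j ∈ Finset.range N, d j * (if j = k then 1 else 0) := by
    intro k hk
    rw [hG]
    refine congrArg Neg.neg (Finset.sum_congr rfl fun j hj => ?_)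
    rw [hlag j (le_of_lt (Finset.mem_range.mp hj)) k hk]
  have hGb : G b = 0 := by
    have := hGx N le_rfl
    rw [hxN] at this
    rw [this, Finset.sum_eq_zero, neg_zero]
    intro j hj
    have hjN : j ≠ N := Nat.ne_of_lt (Finset.mem_range.mp hj)
    rw [if_neg hjN, mul_zero]
  have hGa : G a = 0 := by
    have := hGconst b (Set.right_mem_Icc.mpr hab.le)
    rw [hGb] at this; exact this.symm
  -- d vanishes
  have hdzero : ∀ k, k ≤ N → d k = 0 := by
    intro k hk
    rcases Nat.lt_or_ge k N with hkN | hkN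
    · have h1 := hGx k hk
      have h2 := hGconst (x k) (hxmem k hk)
      rw [hGa] at h2
      rw [h2] at h1
      have : ∑ j ∈ Finset.range N, d j * (if j = k then (1 : ℝ) else 0) = d k := by
        rw [Finset.sum_eq_single k]
        · simp
        · intro j _ hjk; rw [if_neg hjk, mul_zero]
        · intro hk'; exact absurd (Finset.mem_range.mpr hkN) hk'
      rw [this] at h1
      linarith
    · have hk' : k = N := le_antisymm hk hkN
      show ∑ j ∈ Finset.Icc (k + 1) N, c j = 0
      rw [hk', Finset.Icc_eq_empty (by omega), Finset.sum_empty]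
  -- conclude
  intro i hi1 hiN
  have hsplit : d (i - 1) = c i + d i := by
    have h1 : i - 1 + 1 = i := by omega
    have h2 : Finset.Icc i N = insert i (Finset.Icc (i + 1) N) := by
      ext m
      simp only [Finset.mem_Icc, Finset.mem_insert]
      omega
    show ∑ j ∈ Finset.Icc (i - 1 + 1) N, c j = c i + ∑ j ∈ Finset.Icc (i + 1) N, c j
    rw [h1, h2, Finset.sum_insert (by simp only [Finset.mem_Icc]; omega)]
  have h1 := hdzero (i - 1) (by omega)
  have h2 := hdzero i hiN
  rw [h1, h2] at hsplit
  linarith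
end

section
/- Assume ∑_{i=0}^N l_i(x) = 1 for all x ∈ [a,b]. Then interpolation and histopolation commute with differentiation: for every continuously differentiable function f : [a,b] → ℝ, the identity d/dx p⁰(f)(x) = p¹(f′)(x) holds for all x ∈ [a,b], i.e. ∑_{i=0}^N f(x_i) l_i′(x) = ∑_{j=1}^N (f(x_j) − f(x_{j−1})) h_j(x). -/
/-- Assuming `∑ l i ≡ 1` on `[a,b]`, interpolation and histopolation
commute with differentiation: for every C¹ function `f` on `[a,b]`,
`(p⁰ f)' = p¹ (f')` on `[a,b]`, i.e.
`∑_{i=0}^N f (x i) * l i' (t) = ∑_{j=1}^N (f (x j) - f (x (j-1))) * h j t`. -/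
theorem interpolation_commutes_with_derivative
    (N : ℕ) (hN : 1 ≤ N) (a b : ℝ) (x : ℕ → ℝ)
    (hx0 : x 0 = a) (hxN : x N = b)
    (hgrid : ∀ i, i < N → x i < x (i + 1))
    (l : ℕ → ℝ → ℝ)
    (hC1 : ∀ i ≤ N, ContDiffOn ℝ 1 (l i) (Set.Icc a b))
    (hlag : ∀ i ≤ N, ∀ j ≤ N, l i (x j) = if i = j then (1 : ℝ) else 0)
    (h : ℕ → ℝ → ℝ)
    (hdef : ∀ i, 1 ≤ i → i ≤ N → ∀ t : ℝ,
      h i t = -∑ j ∈ Finset.range i, derivWithin (l j) (Set.Icc a b) t)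
    (hone : ∀ t ∈ Set.Icc a b, ∑ i ∈ Finset.range (N + 1), l i t = 1)
    (f : ℝ → ℝ) (hf : ContDiffOn ℝ 1 f (Set.Icc a b)) :
    ∀ t ∈ Set.Icc a b,
      derivWithin (fun s => ∑ i ∈ Finset.range (N + 1), f (x i) * l i s)
          (Set.Icc a b) t
        = ∑ j ∈ Finset.Icc 1 N,
            (∫ s in (x (j - 1))..(x j), derivWithin f (Set.Icc a b) s) * h j t ∧
      ∑ i ∈ Finset.range (N + 1), f (x i) * derivWithin (l i) (Set.Icc a b) t
        = ∑ j ∈ Finset.Icc 1 N, (f (x j) - f (x (j - 1))) * h j t := by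
  -- monotonicity of the grid
  have key : ∀ j, j ≤ N → ∀ i, i ≤ j → x i ≤ x j := by
    intro j
    induction j with
    | zero =>
        intro _ i hi
        have : i = 0 := Nat.le_zero.mp hi
        rw [this]
    | succ n ih =>
        intro hj i hi
        rcases Nat.eq_or_lt_of_le hi with rfl | hlt
        · exact le_rfl
        · exact (ih (by omega) i (Nat.lt_succ_iff.mp hlt)).trans (hgrid n (by omega)).le
  have hab : a < b := by
    have h1 : x (N - 1) < x N := by
      have := hgrid (N - 1) (by omega)
      simpa [Nat.sub_add_cancel hN] using this
    calc a = x 0 := hx0.symm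
      _ ≤ x (N - 1) := key (N - 1) (by omega) 0 (by omega)
      _ < x N := h1
      _ = b := hxN
  have hud : UniqueDiffOn ℝ (Set.Icc a b) := uniqueDiffOn_Icc hab
  -- FTC
  have hFTC : ∀ j ∈ Finset.Icc 1 N,
      (∫ s in (x (j - 1))..(x j), derivWithin f (Set.Icc a b) s)
        = f (x j) - f (x (j - 1)) := by
    intro j hj
    obtain ⟨hj1, hjN⟩ := Finset.mem_Icc.mp hj
    have hax : a ≤ x (j - 1) := hx0 ▸ key (j - 1) (by omega) 0 (by omega)
    have hxb : x j ≤ b := hxN ▸ key N le_rfl j hjN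
    have hle : x (j - 1) ≤ x j := key j hjN (j - 1) (by omega)
    have hsub : Set.Icc (x (j - 1)) (x j) ⊆ Set.Icc a b := Set.Icc_subset_Icc hax hxb
    apply intervalIntegral.integral_eq_sub_of_hasDeriv_right_of_le hle
    · exact hf.continuousOn.mono hsub
    · intro t ht
      have htab : t ∈ Set.Ioo a b := ⟨hax.trans_lt ht.1, ht.2.trans_le hxb⟩
      have hnhds : Set.Icc a b ∈ nhds t := Icc_mem_nhds htab.1 htab.2
      have hdf : HasDerivAt f (derivWithin f (Set.Icc a b) t) t :=
        ((hf.differentiableOn one_ne_zero t (Set.Ioo_subset_Icc_self htab)).hasDerivWithinAt).hasDerivAt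
          hnhds
      exact hdf.hasDerivWithinAt
    · have hcont : ContinuousOn (derivWithin f (Set.Icc a b)) (Set.Icc (x (j-1)) (x j)) :=
        (hf.continuousOn_derivWithin hud le_rfl).mono hsub
      exact (hcont.mono (by rw [Set.uIcc_of_le hle])).intervalIntegrable
  intro t ht
  set D : ℕ → ℝ := fun i => derivWithin (l i) (Set.Icc a b) t with hD
  set H : ℕ → ℝ := fun m => ∑ k ∈ Finset.range m, D k with hH
  have hdiff : ∀ i ∈ Finset.range (N + 1),
      HasDerivWithinAt (l i) (D i) (Set.Icc a b) t := by
    intro i hi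
    exact (((hC1 i (by simpa [Nat.lt_succ_iff] using hi)).differentiableOn one_ne_zero) t
      ht).hasDerivWithinAt
  -- sum of derivatives is zero
  have hzero : H (N + 1) = 0 := by
    have hsum : HasDerivWithinAt (fun s => ∑ i ∈ Finset.range (N + 1), l i s)
        (∑ i ∈ Finset.range (N + 1), D i) (Set.Icc a b) t :=
      HasDerivWithinAt.fun_sum hdiff
    have hconst : HasDerivWithinAt (fun s => ∑ i ∈ Finset.range (N + 1), l i s)
        0 (Set.Icc a b) t := by
      have : HasDerivWithinAt (fun _ : ℝ => (1 : ℝ)) 0 (Set.Icc a b) t :=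
        hasDerivWithinAt_const t _ 1
      exact this.congr (fun s hs => (hone s hs)) (hone t ht)
    have := (hsum.derivWithin (hud t ht)).symm.trans (hconst.derivWithin (hud t ht))
    simpa [hH] using this
  have hHN : H N = -D N := by
    have : H (N + 1) = H N + D N := Finset.sum_range_succ _ _
    linarith [hzero, this]
  -- the algebraic identity (second conjunct)
  have goal2 : ∑ i ∈ Finset.range (N + 1), f (x i) * D i
      = ∑ j ∈ Finset.Icc 1 N, (f (x j) - f (x (j - 1))) * h j t := by
    have hrw : ∀ j ∈ Finset.Icc 1 N,
        (f (x j) - f (x (j - 1))) * h j t = (f (x j) - f (x (j - 1))) * (-(H j)) := by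
      intro j hj
      obtain ⟨hj1, hjN⟩ := Finset.mem_Icc.mp hj
      rw [hdef j hj1 hjN t]
    rw [Finset.sum_congr rfl hrw]
    rw [← Finset.Ico_add_one_right_eq_Icc, Finset.sum_Ico_eq_sum_range]
    have hsimp : ∀ i ∈ Finset.range (N + 1 - 1),
        (f (x (1 + i)) - f (x (1 + i - 1))) * (-(H (1 + i)))
          = (f (x i) * H i - f (x (i + 1)) * H (i + 1)) + f (x i) * D i := by
      intro i _
      have h1 : 1 + i = i + 1 := Nat.add_comm 1 i
      have h3 : H (i + 1) = H i + D i := Finset.sum_range_succ _ _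
      rw [h1]
      simp only [Nat.add_sub_cancel]
      rw [h3]; ring
    rw [Finset.sum_congr rfl hsimp]
    rw [Finset.sum_add_distrib, Finset.sum_range_sub' (fun i => f (x i) * H i)]
    have hH0 : H 0 = 0 := rfl
    have hN1 : N + 1 - 1 = N := by omega
    rw [hN1, hH0, hHN, Finset.sum_range_succ]
    ring
  constructor
  · have hderiv : derivWithin (fun s => ∑ i ∈ Finset.range (N + 1), f (x i) * l i s)
        (Set.Icc a b) t = ∑ i ∈ Finset.range (N + 1), f (x i) * D i := by
      have : HasDerivWithinAt (fun s => ∑ i ∈ Finset.range (N + 1), f (x i) * l i s)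
          (∑ i ∈ Finset.range (N + 1), f (x i) * D i) (Set.Icc a b) t :=
        HasDerivWithinAt.fun_sum (fun i hi => (hdiff i hi).const_mul (f (x i)))
      exact this.derivWithin (hud t ht)
    rw [hderiv, goal2]
    exact Finset.sum_congr rfl fun j hj => by rw [hFTC j hj]
  · exact goal2
end

section
/- Assume ∑_{i=0}^N l_i(x) = 1 for all x ∈ [a,b]. Then the image of the span U_l of l_0, …, l_N (as functions on [a,b]) under differentiation equals the span U_h of the histopolation functions h_1, …, h_N: every derivative of a function in U_l lies in the span of h_1, …, h_N, and every h_i is the derivative of a function in U_l. -/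
private lemma abel_aux (c H : ℕ → ℝ) (h0 : H 0 = 0) : ∀ n : ℕ,
    ∑ i ∈ Finset.range (n + 1), c i * (H (i + 1) - H i)
      = ∑ j ∈ Finset.Icc 1 n, (c j - c (j - 1)) * (-H j) + c n * H (n + 1) := by
  intro n
  induction n with
  | zero => simp [h0]
  | succ n ih =>
      rw [Finset.sum_range_succ, ih, Finset.sum_Icc_succ_top (by omega : 1 ≤ n + 1)]
      simp only [Nat.add_sub_cancel]
      ring

/-- Assuming `∑ l i ≡ 1` on `[a,b]`, the image under differentiation of
the span `U_l` of `l 0, …, l N` equals the span `U_h` of `h 1, …, h N` (as functions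
on `[a,b]`): the derivative of every element of `U_l` lies in `U_h`, and every `h j`
is the derivative of an element of `U_l`. -/
theorem derivative_image_of_lagrange_span
    (N : ℕ) (hN : 1 ≤ N) (a b : ℝ) (x : ℕ → ℝ)
    (hx0 : x 0 = a) (hxN : x N = b)
    (hgrid : ∀ i, i < N → x i < x (i + 1))
    (l : ℕ → ℝ → ℝ)
    (hC1 : ∀ i ≤ N, ContDiffOn ℝ 1 (l i) (Set.Icc a b))
    (hlag : ∀ i ≤ N, ∀ j ≤ N, l i (x j) = if i = j then (1 : ℝ) else 0)
    (h : ℕ → ℝ → ℝ)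
    (hdef : ∀ i, 1 ≤ i → i ≤ N → ∀ t : ℝ,
      h i t = -∑ j ∈ Finset.range i, derivWithin (l j) (Set.Icc a b) t)
    (hone : ∀ t ∈ Set.Icc a b, ∑ i ∈ Finset.range (N + 1), l i t = 1) :
    (∀ c : ℕ → ℝ, ∃ d : ℕ → ℝ, ∀ t ∈ Set.Icc a b,
      derivWithin (fun s => ∑ i ∈ Finset.range (N + 1), c i * l i s) (Set.Icc a b) t
        = ∑ j ∈ Finset.Icc 1 N, d j * h j t) ∧
    (∀ j, 1 ≤ j → j ≤ N → ∃ c : ℕ → ℝ, ∀ t ∈ Set.Icc a b,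
      h j t = derivWithin (fun s => ∑ i ∈ Finset.range (N + 1), c i * l i s)
        (Set.Icc a b) t) := by
  -- a < b
  have mono : ∀ k, k ≤ N → 1 ≤ k → x 0 < x k := by
    intro k
    induction k with
    | zero => omega
    | succ n ih =>
        intro hk _
        rcases Nat.eq_zero_or_pos n with h0 | h0
        · subst h0; simpa using hgrid 0 (by omega)
        · exact (ih (by omega) h0).trans (hgrid n (by omega))
  have hab : a < b := by
    rw [← hx0, ← hxN]; exact mono N le_rfl hN
  have hu : ∀ t ∈ Set.Icc a b, UniqueDiffWithinAt ℝ (Set.Icc a b) t :=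
    fun t ht => (uniqueDiffOn_Icc hab) t ht
  -- derivative of linear combinations
  have key : ∀ (c : ℕ → ℝ), ∀ t ∈ Set.Icc a b,
      derivWithin (fun s => ∑ i ∈ Finset.range (N + 1), c i * l i s) (Set.Icc a b) t
        = ∑ i ∈ Finset.range (N + 1), c i * derivWithin (l i) (Set.Icc a b) t := by
    intro c t ht
    have hder : HasDerivWithinAt (fun s => ∑ i ∈ Finset.range (N + 1), c i * l i s)
        (∑ i ∈ Finset.range (N + 1), c i * derivWithin (l i) (Set.Icc a b) t)
        (Set.Icc a b) t := by
      refine HasDerivWithinAt.fun_sum (fun i hi => ?_)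
      have hdi : DifferentiableWithinAt ℝ (l i) (Set.Icc a b) t :=
        ((hC1 i (by simpa [Nat.lt_succ_iff] using Finset.mem_range.mp hi)).differentiableOn
          one_ne_zero) t ht
      exact hdi.hasDerivWithinAt.const_mul (c i)
    exact hder.derivWithin (hu t ht)
  -- sum of derivatives is zero
  have hzero : ∀ t ∈ Set.Icc a b,
      ∑ i ∈ Finset.range (N + 1), derivWithin (l i) (Set.Icc a b) t = 0 := by
    intro t ht
    have h1 : derivWithin (fun s => ∑ i ∈ Finset.range (N + 1), (1 : ℝ) * l i s)
        (Set.Icc a b) t = derivWithin (fun _ : ℝ => (1 : ℝ)) (Set.Icc a b) t := by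
      refine derivWithin_congr (fun s hs => ?_) ?_
      · simp only [one_mul]; exact hone s hs
      · simp only [one_mul]; exact hone t ht
    have h3 : derivWithin (fun _ : ℝ => (1 : ℝ)) (Set.Icc a b) t = 0 :=
      congrFun (derivWithin_const (Set.Icc a b) (1 : ℝ)) t
    have h2 := key (fun _ => 1) t ht
    simp only [one_mul] at h1 h2
    rw [h1, h3] at h2
    exact h2.symm
  constructor
  · -- derivative of a combination lies in span of h's
    intro c
    refine ⟨fun j => c j - c (j - 1), fun t ht => ?_⟩
    rw [key c t ht]
    set H : ℕ → ℝ := fun j => ∑ k ∈ Finset.range j, derivWithin (l k) (Set.Icc a b) t with hH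
    have hHsucc : ∀ i, derivWithin (l i) (Set.Icc a b) t = H (i + 1) - H i := by
      intro i; simp [hH, Finset.sum_range_succ]
    have hH0 : H 0 = 0 := by simp [hH]
    have hHtop : H (N + 1) = 0 := hzero t ht
    calc ∑ i ∈ Finset.range (N + 1), c i * derivWithin (l i) (Set.Icc a b) t
        = ∑ i ∈ Finset.range (N + 1), c i * (H (i + 1) - H i) := by
          refine Finset.sum_congr rfl fun i _ => by rw [hHsucc]
      _ = ∑ j ∈ Finset.Icc 1 N, (c j - c (j - 1)) * (-H j) + c N * H (N + 1) :=
          abel_aux c H hH0 N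
      _ = ∑ j ∈ Finset.Icc 1 N, (c j - c (j - 1)) * h j t := by
          rw [hHtop, mul_zero, add_zero]
          refine Finset.sum_congr rfl fun j hj => ?_
          obtain ⟨hj1, hjN⟩ := Finset.mem_Icc.mp hj
          rw [hdef j hj1 hjN t, hH]
  · -- every h j is a derivative of a combination
    intro j hj1 hjN
    refine ⟨fun i => if i < j then (-1 : ℝ) else 0, fun t ht => ?_⟩
    rw [key _ t ht, hdef j hj1 hjN t]
    have h0 : ∑ i ∈ Finset.range (N + 1),
        (if i < j then (-1 : ℝ) else 0) * derivWithin (l i) (Set.Icc a b) t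
        = ∑ i ∈ Finset.range j, -derivWithin (l i) (Set.Icc a b) t := by
      rw [← Finset.sum_range_add_sum_Ico _ (by omega : j ≤ N + 1)]
      have h1 : ∑ i ∈ Finset.range j,
          (if i < j then (-1 : ℝ) else 0) * derivWithin (l i) (Set.Icc a b) t
          = ∑ i ∈ Finset.range j, -derivWithin (l i) (Set.Icc a b) t := by
        refine Finset.sum_congr rfl fun i hi => ?_
        rw [if_pos (Finset.mem_range.mp hi)]; ring
      have h2 : ∑ i ∈ Finset.Ico j (N + 1),
          (if i < j then (-1 : ℝ) else 0) * derivWithin (l i) (Set.Icc a b) t = 0 := by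
        refine Finset.sum_eq_zero fun i hi => ?_
        have hij : ¬ i < j := by
          have := (Finset.mem_Ico.mp hi).1; omega
        rw [if_neg hij, zero_mul]
      rw [h1, h2, add_zero]
    rw [h0, ← Finset.sum_neg_distrib]
end

section
/- Invertibility of the histopolation mass matrix: let D be a real (N+1)×(N+1) matrix of rank N whose kernel contains the constant vectors (D·𝟙 = 0, where 𝟙 is the all-ones vector), and define the (N+1)×N matrix V by V_{k,i} = −∑_{j=0}^{i−1} D_{k,j} for i = 1,…,N. Then V has full column rank N, and consequently for any diagonal (N+1)×(N+1) matrix M with strictly positive diagonal entries, the histopolation mass matrix Vᵀ M V is symmetric positive definite (and in particular invertible). -/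
open Matrix

/-- Invertibility of the histopolation mass matrix. If the
`(N+1) × (N+1)` matrix `D` has rank `N` and annihilates the constant vectors,
then the histopolation Vandermonde matrix `V k i = -∑_{j ≤ i} D k j` (with
`i : Fin N` representing the 1-based index `i+1`) has full column rank `N`, and
for every diagonal matrix `M` with strictly positive diagonal entries the
histopolation mass matrix `Vᵀ M V` is symmetric positive definite, in particular
invertible. -/
theorem histopolation_mass_matrix_pos_def
    (N : ℕ) (hN : 1 ≤ N)
    (D : Matrix (Fin (N + 1)) (Fin (N + 1)) ℝ)
    (hrank : D.rank = N)
    (hker : D *ᵥ (fun _ => (1 : ℝ)) = 0)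
    (V : Matrix (Fin (N + 1)) (Fin N) ℝ)
    (hV : ∀ k i, V k i = -∑ j : Fin (N + 1), if (j : ℕ) ≤ (i : ℕ) then D k j else 0) :
    V.rank = N ∧
    ∀ w : Fin (N + 1) → ℝ, (∀ k, 0 < w k) →
      (Vᵀ * Matrix.diagonal w * V).PosDef ∧ IsUnit (Vᵀ * Matrix.diagonal w * V) := by
  -- kernel of D is exactly the span of the constant vector
  have hone : (fun _ => (1:ℝ)) ≠ (0 : Fin (N+1) → ℝ) := by
    intro h; exact one_ne_zero (congrFun h 0)
  have hker_span : LinearMap.ker D.mulVecLin = Submodule.span ℝ {(fun _ => (1:ℝ))} := by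
    symm
    apply Submodule.eq_of_le_of_finrank_le
    · rw [Submodule.span_le, Set.singleton_subset_iff]
      simpa [LinearMap.mem_ker] using hker
    · have h1 := LinearMap.finrank_range_add_finrank_ker D.mulVecLin
      rw [Module.finrank_pi, Fintype.card_fin] at h1
      have h2 : Module.finrank ℝ (LinearMap.range D.mulVecLin) = N := hrank
      rw [finrank_span_singleton hone]
      omega
  -- injectivity of V
  have hinj : ∀ x : Fin N → ℝ, V *ᵥ x = 0 → x = 0 := by
    intro x hx
    set y : Fin (N+1) → ℝ := fun j => ∑ i : Fin N, if (j : ℕ) ≤ (i : ℕ) then x i else 0 with hy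
    have hDy : D *ᵥ y = 0 := by
      have : D *ᵥ y = -(V *ᵥ x) := by
        funext k
        simp only [mulVec, dotProduct, hy, Pi.neg_apply, hV]
        simp only [Finset.mul_sum, mul_ite, mul_zero, neg_mul, Finset.sum_neg_distrib,
          neg_neg, Finset.sum_mul, ite_mul, zero_mul]
        rw [Finset.sum_comm]
      rw [this, hx, neg_zero]
    have hymem : y ∈ Submodule.span ℝ {(fun _ => (1:ℝ))} := by
      rw [← hker_span]; exact hDy
    obtain ⟨c, hc⟩ := Submodule.mem_span_singleton.mp hymem
    have hylast : y (Fin.last N) = 0 := by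
      simp only [hy]
      apply Finset.sum_eq_zero
      intro i _
      have : ¬ ((Fin.last N : Fin (N+1)) : ℕ) ≤ (i : ℕ) := by
        simp [Fin.last]
      simp [this]
    have hc0 : c = 0 := by
      have := congrFun hc (Fin.last N)
      simp [hylast] at this
      exact this
    have hy0 : y = 0 := by rw [← hc, hc0, zero_smul]
    funext i
    have h1 : y i.castSucc - y i.succ = x i := by
      simp only [hy]
      rw [← Finset.sum_sub_distrib]
      rw [show x i = ∑ i' : Fin N, if i' = i then x i' else 0 by simp]
      apply Finset.sum_congr rfl
      intro i' _
      simp only [Fin.coe_castSucc, Fin.val_succ]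
      rcases lt_trichotomy (i' : ℕ) (i : ℕ) with h | h | h
      · have h4 : i' ≠ i := fun h' => by rw [h'] at h; omega
        rw [if_neg (by omega), if_neg (by omega), if_neg h4, sub_zero]
      · have h4 : i' = i := Fin.ext h
        rw [if_pos (by omega), if_neg (by omega), if_pos h4, sub_zero]
      · have h4 : i' ≠ i := fun h' => by rw [h'] at h; omega
        rw [if_pos (by omega), if_pos (by omega), if_neg h4, sub_self]
    rw [hy0] at h1
    simpa using h1.symm
  have hinjV : Function.Injective V.mulVecLin := by
    rw [← LinearMap.ker_eq_bot]
    rw [LinearMap.ker_eq_bot']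
    intro x hx
    exact hinj x hx
  have hrankV : V.rank = N := by
    rw [Matrix.rank, LinearMap.finrank_range_of_inj hinjV, Module.finrank_pi,
      Fintype.card_fin]
  refine ⟨hrankV, fun w hw => ?_⟩
  have hpd : (Vᵀ * Matrix.diagonal w * V).PosDef := by
    rw [Matrix.posDef_iff_dotProduct_mulVec]
    constructor
    · have := Matrix.isHermitian_conjTranspose_mul_mul V (Matrix.isHermitian_diagonal w)
      rwa [Matrix.conjTranspose_eq_transpose_of_trivial] at this
    · intro x hx
      have hVx : V *ᵥ x ≠ 0 := fun h => hx (hinj x h)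
      have heq : star x ⬝ᵥ (Vᵀ * Matrix.diagonal w * V) *ᵥ x
          = ∑ k, w k * (V *ᵥ x) k ^ 2 := by
        rw [star_trivial, ← Matrix.mulVec_mulVec, ← Matrix.mulVec_mulVec,
          Matrix.dotProduct_mulVec, Matrix.vecMul_transpose]
        simp [dotProduct, Matrix.mulVec_diagonal, pow_two]
        ring_nf
        apply Finset.sum_congr rfl
        intros; ring
      rw [heq]
      obtain ⟨k0, hk0⟩ := Function.ne_iff.mp hVx
      apply Finset.sum_pos'
      · intro k _
        exact mul_nonneg (hw k).le (sq_nonneg _)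
      · exact ⟨k0, Finset.mem_univ k0,
          mul_pos (hw k0) (pow_two_pos_of_ne_zero hk0)⟩
  exact ⟨hpd, hpd.isUnit⟩
end
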